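/- For every positive integer k and every real ε > 0, there exists a positive integer N such that every F_k(3)-free simple graph G on n > N vertices with independence number α(G) ≤ ε·n has fewer than ε·n² edges. -/

import Mathlib

/-- `G` contains the `k`-fan `F_k(3)`: a vertex `v` and `k` pairwise disjoint pairs of
vertices, none containing `v`, each pair together with `v` inducing a triangle. -/
def ContainsFan {V : Type*} (G : SimpleGraph V) (k r : ℕ) : Prop :=
  ∃ (v : V) (S : Fin k → Set V),
    (∀ i, v ∉ S i) ∧
    (∀ i, (S i).ncard = 2 * r) ∧
    (∀ i j, i ≠ j → Disjoint (S i) (S j)) ∧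
    (∀ i, G.IsClique (insert v (S i)))

/-- A set of vertices is independent if no two of its vertices are adjacent. -/
def IsIndepSet {V : Type*} (G : SimpleGraph V) (s : Set V) : Prop :=
  s.Pairwise fun u v => ¬ G.Adj u v

/-- `s` contains `j` pairwise disjoint adjacent pairs (a matching of size `j`). -/
def HasMatching {V : Type*} (G : SimpleGraph V) (j : ℕ) (s : Set V) : Prop :=
  ∃ S : Fin j → Set V, (∀ i, S i ⊆ s) ∧ (∀ i, (S i).ncard = 2) ∧
    (∀ i i', i ≠ i' → Disjoint (S i) (S i')) ∧ (∀ i, G.IsClique (S i))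

lemma exists_adj_of_not_indep {V : Type*} (G : SimpleGraph V) {s : Set V}
    (h : ¬ IsIndepSet G s) : ∃ a ∈ s, ∃ b ∈ s, a ≠ b ∧ G.Adj a b := by
  simp only [IsIndepSet, Set.Pairwise, not_forall, not_not] at h
  obtain ⟨a, ha, b, hb, hne, hadj⟩ := h
  exact ⟨a, ha, b, hb, hne, hadj⟩

lemma no_matching_ncard_le {V : Type*} (G : SimpleGraph V) (A : ℝ)
    (hA : ∀ t : Set V, IsIndepSet G t → (t.ncard : ℝ) ≤ A) :
    ∀ j : ℕ, ∀ s : Set V, s.Finite → ¬ HasMatching G (j + 1) s →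
      (s.ncard : ℝ) ≤ A + 2 * j := by
  intro j
  induction j with
  | zero =>
    intro s hs hM
    have hind : IsIndepSet G s := by
      by_contra hind
      obtain ⟨a, ha, b, hb, hne, hadj⟩ := exists_adj_of_not_indep G hind
      apply hM
      refine ⟨fun _ => {a, b}, fun _ x hx => ?_, fun _ => Set.ncard_pair hne,
        fun i i' h => absurd (Fin.ext (by omega)) h, fun _ => ?_⟩
      · rcases hx with rfl | rfl
        · exact ha
        · exact hb
      · rw [SimpleGraph.isClique_pair]
        intro _; exact hadj
    simpa using hA s hind
  | succ j ih =>
    intro s hs hM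
    by_cases hind : IsIndepSet G s
    · have := hA s hind
      push_cast
      linarith
    · obtain ⟨a, ha, b, hb, hne, hadj⟩ := exists_adj_of_not_indep G hind
      set s' : Set V := s \ {a, b} with hs'
      have hM' : ¬ HasMatching G (j + 1) s' := by
        rintro ⟨S, hsub, hcard, hdisj, hcl⟩
        apply hM
        refine ⟨Fin.cons {a, b} S, ?_, ?_, ?_, ?_⟩
        · intro i
          refine Fin.cases ?_ ?_ i
          · intro x hx
            rcases hx with rfl | rfl
            · exact ha
            · exact hb
          · intro i'
            exact (hsub i').trans Set.diff_subset
        · intro i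
          refine Fin.cases ?_ ?_ i
          · exact Set.ncard_pair hne
          · exact hcard
        · intro i i' hii'
          refine Fin.cases (motive := fun i => i ≠ i' → Disjoint ((Fin.cons {a,b} S : Fin (j+2) → Set V) i) ((Fin.cons {a,b} S : Fin (j+2) → Set V) i')) ?_ ?_ i hii'
          · refine Fin.cases (motive := fun i' => (0 : Fin (j+2)) ≠ i' → Disjoint ({a,b} : Set V) ((Fin.cons {a,b} S : Fin (j+2) → Set V) i')) ?_ ?_ i'
            · intro h; exact absurd rfl h
            · intro m _
              simp only [Fin.cons_succ]
              rw [Set.disjoint_left]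
              intro x hx hxm
              have := hsub m hxm
              rw [hs', Set.mem_diff] at this
              exact this.2 hx
          · intro m
            refine Fin.cases (motive := fun i' => (Fin.succ m : Fin (j+2)) ≠ i' → Disjoint ((Fin.cons {a,b} S : Fin (j+2) → Set V) m.succ) ((Fin.cons {a,b} S : Fin (j+2) → Set V) i')) ?_ ?_ i'
            · intro _
              simp only [Fin.cons_succ, Fin.cons_zero]
              rw [Set.disjoint_right]
              intro x hx hxm
              have := hsub m hxm
              rw [hs', Set.mem_diff] at this
              exact this.2 hx
            · intro m' hmm'
              simp only [Fin.cons_succ]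
              exact hdisj m m' (fun h => hmm' (by rw [h]))
        · intro i
          refine Fin.cases ?_ ?_ i
          · simp only [Fin.cons_zero]
            rw [SimpleGraph.isClique_pair]
            intro _; exact hadj
          · intro m
            simpa using hcl m
      have hcard' : (s'.ncard : ℝ) ≤ A + 2 * j := ih s' (hs.subset Set.diff_subset) hM'
      have hsub2 : s ⊆ s' ∪ {a, b} := by
        intro x hx
        by_cases hx2 : x ∈ ({a, b} : Set V)
        · exact Or.inr hx2
        · exact Or.inl ⟨hx, hx2⟩
      have hf : (s' ∪ {a, b} : Set V).Finite :=
        (hs.subset Set.diff_subset).union ((Set.finite_singleton b).insert a)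
      have h1 : s.ncard ≤ s'.ncard + ({a, b} : Set V).ncard :=
        le_trans (Set.ncard_le_ncard hsub2 hf) (Set.ncard_union_le _ _)
      rw [Set.ncard_pair hne] at h1
      have : (s.ncard : ℝ) ≤ (s'.ncard : ℝ) + 2 := by exact_mod_cast h1
      push_cast
      linarith

theorem ramsey_turan_fan_triangle (k : ℕ) (hk : 0 < k) (ε : ℝ) (hε : 0 < ε) :
    ∃ N : ℕ, 0 < N ∧
      ∀ n : ℕ, n > N → ∀ G : SimpleGraph (Fin n),
        ¬ ContainsFan G k 1 →
        (∀ s : Set (Fin n), IsIndepSet G s → (s.ncard : ℝ) ≤ ε * n) →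
        (G.edgeSet.ncard : ℝ) < ε * (n : ℝ) ^ 2 := by
  classical
  refine ⟨⌈(2 * k : ℝ) / ε⌉₊ + 1, Nat.succ_pos _, ?_⟩
  intro n hn G hfan hind
  have hn0 : 0 < n := lt_of_le_of_lt (Nat.zero_le _) hn
  have hnR : (0 : ℝ) < n := by exact_mod_cast hn0
  -- ε * n > 2 * k
  have hεn : 2 * (k : ℝ) < ε * n := by
    have h1 : ((2 * k : ℝ) / ε) ≤ (⌈(2 * k : ℝ) / ε⌉₊ : ℝ) := Nat.le_ceil _
    have h2 : ((⌈(2 * k : ℝ) / ε⌉₊ : ℝ) + 1) < (n : ℝ) := by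
      exact_mod_cast hn
    have h3 : (2 * k : ℝ) / ε < n := by linarith
    calc 2 * (k : ℝ) = ((2 * k : ℝ) / ε) * ε := by field_simp
      _ < (n : ℝ) * ε := by
          exact mul_lt_mul_of_pos_right h3 hε
      _ = ε * n := mul_comm _ _
  obtain ⟨j, hj⟩ : ∃ j, k = j + 1 := ⟨k - 1, (Nat.succ_pred_eq_of_pos hk).symm⟩
  -- degree bound
  have hdeg : ∀ v : Fin n, (G.degree v : ℝ) ≤ ε * n + 2 * j := by
    intro v
    have hnm : ¬ HasMatching G (j + 1) (G.neighborSet v) := by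
      rintro ⟨S, hsub, hcard, hdisj, hcl⟩
      apply hfan
      rw [hj]
      refine ⟨v, S, ?_, ?_, hdisj, ?_⟩
      · intro i hv
        exact G.irrefl (hsub i hv)
      · intro i; rw [hcard i]
      · intro i
        refine (hcl i).insert ?_
        intro b hb _
        exact hsub i hb
    have := no_matching_ncard_le G (ε * n) hind j (G.neighborSet v)
      (Set.toFinite _) hnm
    have hcardeq : (G.neighborSet v).ncard = G.degree v := by
      rw [Set.ncard_eq_toFinset_card']
      simp [SimpleGraph.neighborFinset, SimpleGraph.degree]
    rw [hcardeq] at this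
    exact this
  -- handshake
  have hsum : ∑ v : Fin n, G.degree v = 2 * G.edgeFinset.card :=
    SimpleGraph.sum_degrees_eq_twice_card_edges G
  have hcard : G.edgeSet.ncard = G.edgeFinset.card := by
    rw [Set.ncard_eq_toFinset_card']
    exact congrArg Finset.card (Finset.ext fun e => by simp)
  have hsumR : (2 : ℝ) * G.edgeSet.ncard ≤ n * (ε * n + 2 * j) := by
    have h1 : (∑ v : Fin n, (G.degree v : ℝ)) ≤ ∑ v : Fin n, (ε * n + 2 * j) :=
      Finset.sum_le_sum (fun v _ => hdeg v)
    rw [Finset.sum_const, Finset.card_univ, Fintype.card_fin, nsmul_eq_mul] at h1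
    have h2 : (∑ v : Fin n, (G.degree v : ℝ)) = 2 * G.edgeSet.ncard := by
      rw [hcard]
      exact_mod_cast hsum
    linarith
  have hjk : (j : ℝ) < k := by
    rw [hj]; push_cast; linarith
  have h2j : 2 * (j : ℝ) < ε * n := by linarith
  calc (G.edgeSet.ncard : ℝ) ≤ n * (ε * n + 2 * j) / 2 := by linarith
    _ < n * (ε * n + ε * n) / 2 := by nlinarith
    _ = ε * n ^ 2 := by ring
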